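/- Let G be a graph on n ≥ 3 vertices with n even, and let G̅ be its complement. Then mp(G) + mp(G̅) ≤ n − 1. Moreover, if equality holds, then G is regular. -/
import Mathlib


open SimpleGraph

/-- An almost-perfect matching: a matching covering all vertices except exactly one. -/
def SimpleGraph.Subgraph.IsAlmostPerfectMatching {V : Type*} {G : SimpleGraph V}
    (M : G.Subgraph) : Prop :=
  M.IsMatching ∧ ∃ v : V, M.verts = {v}ᶜ

/-- `G` has a perfect matching or an almost-perfect matching. -/
def SimpleGraph.HasGoodMatching {V : Type*} (G : SimpleGraph V) : Prop :=
  (∃ M : G.Subgraph, M.IsPerfectMatching) ∨ (∃ M : G.Subgraph, M.IsAlmostPerfectMatching)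

/-- The matching preclusion number of `G`. -/
noncomputable def SimpleGraph.mp {V : Type*} [Fintype V] (G : SimpleGraph V) : ℕ :=
  sInf { k | ∃ F : Finset (Sym2 V), ↑F ⊆ G.edgeSet ∧ F.card = k ∧
    ¬ (G.deleteEdges ↑F).HasGoodMatching }

lemma no_good_matching_aux {V : Type*} [Fintype V] (H : SimpleGraph V)
    (hn : Even (Fintype.card V)) (h3 : 3 ≤ Fintype.card V)
    (v : V) (hv : ∀ w, ¬ H.Adj v w) : ¬ H.HasGoodMatching := by
  rintro (⟨M, hM⟩ | ⟨M, hMm, u, hu⟩)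
  · obtain ⟨w, hw, -⟩ := hM.1 (hM.2 v)
    exact hv w (M.adj_sub hw)
  · have hfin : Fintype M.verts := Fintype.ofFinite _
    have heven := hMm.even_card
    classical
    have hset : M.verts.toFinset = ({u} : Finset V)ᶜ := by
      ext x
      simp [Set.mem_toFinset, hu]
    have hcard : M.verts.toFinset.card = Fintype.card V - 1 := by
      rw [hset, Finset.card_compl, Finset.card_singleton]
    rw [hcard] at heven
    rw [Nat.even_sub (by omega)] at heven
    simp only [Nat.even_iff, Nat.odd_iff] at heven hn
    omega

lemma mp_le_degree {V : Type*} [Fintype V] (G : SimpleGraph V) [DecidableRel G.Adj]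
    (hn : Even (Fintype.card V)) (h3 : 3 ≤ Fintype.card V) (v : V) :
    G.mp ≤ G.degree v := by
  classical
  apply Nat.sInf_le
  refine ⟨G.incidenceFinset v, ?_, ?_, ?_⟩
  · intro e he
    rw [Finset.mem_coe, mem_incidenceFinset] at he
    exact he.1
  · exact G.card_incidenceFinset_eq_degree v
  · apply no_good_matching_aux _ hn h3 v
    intro w hw
    rw [deleteEdges_adj] at hw
    exact hw.2 (by rw [Finset.mem_coe, mem_incidenceFinset]
                   exact ⟨hw.1, Sym2.mem_mk_left v w⟩)

theorem stmt19 {V : Type*} [Fintype V] (G : SimpleGraph V) [DecidableRel G.Adj]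
    (hn : Even (Fintype.card V)) (h3 : 3 ≤ Fintype.card V) :
    G.mp + Gᶜ.mp ≤ Fintype.card V - 1 ∧
      (G.mp + Gᶜ.mp = Fintype.card V - 1 → ∃ d, G.IsRegularOfDegree d) := by
  classical
  have hne : Nonempty V := Fintype.card_pos_iff.mp (by omega)
  obtain ⟨v₀⟩ := hne
  have key : ∀ v w : V, G.mp + Gᶜ.mp ≤ G.degree v + (Fintype.card V - 1 - G.degree w) := by
    intro v w
    have h1 := mp_le_degree G hn h3 v
    have h2 := mp_le_degree Gᶜ hn h3 w
    rw [G.degree_compl] at h2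
    omega
  have hdle : ∀ v : V, G.degree v ≤ Fintype.card V - 1 := fun v =>
    Nat.le_sub_one_of_lt (G.degree_lt_card_verts v)
  constructor
  · have := key v₀ v₀
    have := hdle v₀
    omega
  · intro heq
    refine ⟨G.degree v₀, fun w => ?_⟩
    have h1 := key v₀ w
    have h2 := key w v₀
    have := hdle v₀
    have := hdle w
    omega
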